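/- Biased SGD convergence: Let f: R^n → R be differentiable with L-Lipschitz gradient and f ≥ f* > −∞. Consider iterates x^k = x^{k−1} − γ g^k where, conditioned on x^{k−1}, the stochastic gradient g^k satisfies E[g^k | x^{k−1}] = ∇f(x^{k−1}) + b(x^{k−1}) with ‖b(x)‖ ≤ ε for all x, and E[‖g^k − E[g^k|x^{k−1}]‖² | x^{k−1}] ≤ ν². If 0 < γ ≤ 1/L, then for any t ≥ 1: E[(1/t) Σ_{k=1}^t ‖∇f(x^{k−1})‖²] ≤ (2/(γ t))(f(x⁰) − f*) + γ L ν² + ε². -/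

import Mathlib

open MeasureTheory Real Finset
open scoped RealInnerProductSpace BigOperators

section Aux

variable {n : ℕ}

lemma my_lip_cont {f' : EuclideanSpace ℝ (Fin n) → EuclideanSpace ℝ (Fin n)} {L : ℝ}
    (hL : 0 ≤ L) (hlip : ∀ x y, ‖f' x - f' y‖ ≤ L * ‖x - y‖) : Continuous f' := by
  have : LipschitzWith (Real.toNNReal L) f' :=
    LipschitzWith.of_dist_le_mul fun p q => by
      rw [dist_eq_norm, dist_eq_norm, Real.coe_toNNReal L hL]; exact hlip p q
  exact this.continuous

lemma my_descent {f : EuclideanSpace ℝ (Fin n) → ℝ}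
    {f' : EuclideanSpace ℝ (Fin n) → EuclideanSpace ℝ (Fin n)}
    (hf : ∀ x, HasGradientAt f (f' x) x) {L : ℝ} (hL : 0 ≤ L)
    (hlip : ∀ x y, ‖f' x - f' y‖ ≤ L * ‖x - y‖) (a b : EuclideanSpace ℝ (Fin n)) :
    f b ≤ f a + ⟪f' a, b - a⟫ + L / 2 * ‖b - a‖ ^ 2 := by
  have hf'cont : Continuous f' := my_lip_cont hL hlip
  set v := b - a with hv
  have hline : ∀ s : ℝ, HasDerivAt (fun s : ℝ => a + s • v) v s := fun s => by
    simpa using ((hasDerivAt_id s).smul_const v).const_add a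
  have hφ : ∀ s : ℝ, HasDerivAt (fun s : ℝ => f (a + s • v)) ⟪f' (a + s • v), v⟫ s := by
    intro s
    have h1 := ((hf (a + s • v)).hasFDerivAt).comp_hasDerivAt s (hline s)
    simp at h1; exact h1
  have hcont : Continuous fun s : ℝ => ⟪f' (a + s • v), v⟫ :=
    Continuous.inner (hf'cont.comp (by continuity)) continuous_const
  have key : f b - f a = ∫ s in (0:ℝ)..1, ⟪f' (a + s • v), v⟫ := by
    have h2 := intervalIntegral.integral_eq_sub_of_hasDerivAt
      (f := fun s : ℝ => f (a + s • v)) (f' := fun s => ⟪f' (a + s • v), v⟫)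
      (fun s _ => hφ s) (hcont.intervalIntegrable 0 1)
    simpa [hv] using h2.symm
  have hbound : ∀ s ∈ Set.Icc (0:ℝ) 1, ⟪f' (a + s • v), v⟫ ≤ ⟪f' a, v⟫ + s * (L * ‖v‖ ^ 2) := by
    intro s hs
    have h1 : ⟪f' (a + s • v) - f' a, v⟫ ≤ s * (L * ‖v‖ ^ 2) := by
      calc ⟪f' (a + s • v) - f' a, v⟫ ≤ ‖f' (a + s • v) - f' a‖ * ‖v‖ := real_inner_le_norm _ _
        _ ≤ (L * ‖(a + s • v) - a‖) * ‖v‖ :=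
            mul_le_mul_of_nonneg_right (hlip _ _) (norm_nonneg _)
        _ = s * (L * ‖v‖ ^ 2) := by
            rw [add_sub_cancel_left, norm_smul, Real.norm_eq_abs, abs_of_nonneg hs.1]; ring
    have h2 : ⟪f' (a + s • v), v⟫ = ⟪f' a, v⟫ + ⟪f' (a + s • v) - f' a, v⟫ := by
      rw [inner_sub_left]; ring
    linarith
  have hmono : (∫ s in (0:ℝ)..1, ⟪f' (a + s • v), v⟫)
      ≤ ∫ s in (0:ℝ)..1, (⟪f' a, v⟫ + s * (L * ‖v‖ ^ 2)) := by
    refine intervalIntegral.integral_mono_on (by norm_num) (hcont.intervalIntegrable 0 1)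
      ((continuous_const.add (continuous_id.mul continuous_const)).intervalIntegrable 0 1) hbound
  have hval : (∫ s in (0:ℝ)..1, (⟪f' a, v⟫ + s * (L * ‖v‖ ^ 2)))
      = ⟪f' a, v⟫ + L / 2 * ‖v‖ ^ 2 := by
    have h3 : IntervalIntegrable (fun s : ℝ => s * (L * ‖v‖ ^ 2)) MeasureTheory.volume 0 1 :=
      intervalIntegral.intervalIntegrable_id.mul_const _
    rw [intervalIntegral.integral_add intervalIntegrable_const h3,
      intervalIntegral.integral_mul_const, integral_id]
    norm_num; ring
  have : f b - f a ≤ ⟪f' a, v⟫ + L / 2 * ‖v‖ ^ 2 := by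
    rw [key]; rw [hval] at hmono; exact hmono
  linarith

end Aux

section Aux2

variable {n : ℕ} {Ω : Type*} {mΩ : MeasurableSpace Ω} {μ : Measure Ω}

lemma my_int_mul {u w : Ω → ℝ} (hu : MemLp u 2 μ) (hw : MemLp w 2 μ) :
    Integrable (fun ω => u ω * w ω) μ := by
  refine Integrable.mono' ((hu.integrable_sq.add hw.integrable_sq).div_const 2)
    (hu.aestronglyMeasurable.mul hw.aestronglyMeasurable) (ae_of_all _ fun ω => ?_)
  simp only [Pi.add_apply]
  rw [Real.norm_eq_abs, abs_mul]
  nlinarith [sq_abs (u ω), sq_abs (w ω), sq_nonneg (|u ω| - |w ω|)]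

lemma my_int_inner {u w : Ω → EuclideanSpace ℝ (Fin n)} (hu : MemLp u 2 μ)
    (hw : MemLp w 2 μ) : Integrable (fun ω => ⟪u ω, w ω⟫) μ := by
  refine Integrable.mono' (my_int_mul hu.norm hw.norm)
    (hu.aestronglyMeasurable.inner hw.aestronglyMeasurable) (ae_of_all _ fun ω => ?_)
  rw [Real.norm_eq_abs]
  exact abs_real_inner_le_norm _ _


lemma my_restrict {h : Ω → EuclideanSpace ℝ (Fin n)} {μ : Measure Ω}
    (hh : Integrable h μ) (s : Set Ω) : Integrable h (μ.restrict s) := hh.restrict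

lemma my_coord_integrable {h : Ω → EuclideanSpace ℝ (Fin n)} {μ : Measure Ω}
    (hh : Integrable h μ) (i : Fin n) : Integrable (fun ω => h ω i) μ := by
  have h0 : Integrable (fun ω => (EuclideanSpace.proj i (𝕜 := ℝ)) (h ω)) μ :=
    ContinuousLinearMap.integrable_comp _ hh
  simpa using h0

lemma my_coord_integral {h : Ω → EuclideanSpace ℝ (Fin n)} {μ : Measure Ω}
    (hh : Integrable h μ) (i : Fin n) : ∫ ω, h ω i ∂μ = (∫ ω, h ω ∂μ) i := by
  have h0 := (EuclideanSpace.proj i (𝕜 := ℝ)).integral_comp_comm hh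
  simpa using h0

lemma my_condexp_coord [IsFiniteMeasure μ] {m : MeasurableSpace Ω} (hm : m ≤ mΩ)
    {h : Ω → EuclideanSpace ℝ (Fin n)} (hh : Integrable h μ) (i : Fin n) :
    (μ[fun ω => h ω i | m]) =ᵐ[μ] fun ω => (μ[h | m]) ω i := by
  have hint : Integrable (fun ω => h ω i) μ := my_coord_integrable hh i
  have hcint : Integrable (μ[h|m]) μ := integrable_condExp
  refine (ae_eq_condExp_of_forall_setIntegral_eq hm hint
    (fun s _ _ => ?_) (fun s hs _ => ?_) ?_).symm
  · exact my_coord_integrable (my_restrict hcint s) i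
  · rw [my_coord_integral (my_restrict hcint s) i, my_coord_integral (my_restrict hh s) i,
      setIntegral_condExp hm hh hs]
  · exact (EuclideanSpace.proj i (𝕜 := ℝ)).continuous.comp_aestronglyMeasurable
      stronglyMeasurable_condExp.aestronglyMeasurable

lemma my_coord_memLp {u : Ω → EuclideanSpace ℝ (Fin n)} (hu : MemLp u 2 μ) (i : Fin n) :
    MemLp (fun ω => u ω i) 2 μ :=
  (EuclideanSpace.proj i (𝕜 := ℝ)).comp_memLp' hu

lemma my_integral_inner_condexp [IsProbabilityMeasure μ] {m : MeasurableSpace Ω} (hm : m ≤ mΩ)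
    {v h : Ω → EuclideanSpace ℝ (Fin n)}
    (hvm : AEStronglyMeasurable[m] v μ) (hv2 : MemLp v 2 μ) (hh2 : MemLp h 2 μ) :
    ∫ ω, ⟪v ω, h ω⟫ ∂μ = ∫ ω, ⟪v ω, (μ[h|m]) ω⟫ ∂μ := by
  have hh1 : Integrable h μ := hh2.integrable one_le_two
  have hsum : ∀ (w : Ω → EuclideanSpace ℝ (Fin n)) (ω : Ω),
      ⟪v ω, w ω⟫ = ∑ i : Fin n, v ω i * w ω i := by
    intro w ω
    simp [PiLp.inner_apply, RCLike.inner_apply]; exact Finset.sum_congr rfl fun i _ => mul_comm _ _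
  have hmul : ∀ i : Fin n,
      μ[(fun ω => v ω i * h ω i)|m] =ᵐ[μ] fun ω => v ω i * (μ[h|m]) ω i := by
    intro i
    have hvi : AEStronglyMeasurable[m] (fun ω => v ω i) μ :=
      (EuclideanSpace.proj i (𝕜 := ℝ)).continuous.comp_aestronglyMeasurable hvm
    have h1 := condExp_mul_of_aestronglyMeasurable_left (m := m) (μ := μ) hvi
      (f := fun ω => v ω i) (g := fun ω => h ω i)
      (my_int_mul (my_coord_memLp hv2 i) (my_coord_memLp hh2 i))
      ((my_coord_memLp hh2 i).integrable one_le_two)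
    refine h1.trans ?_
    filter_upwards [my_condexp_coord hm hh1 i] with ω hω
    simp only [Pi.mul_apply]
    rw [hω]
  have hce : μ[(fun ω => ⟪v ω, h ω⟫)|m] =ᵐ[μ] fun ω => ⟪v ω, (μ[h|m]) ω⟫ := by
    have h0 : (fun ω => ⟪v ω, h ω⟫) = fun ω => ∑ i : Fin n, v ω i * h ω i := by
      funext ω; exact hsum h ω
    rw [h0]
    have hsumint : ∀ i ∈ Finset.univ (α := Fin n),
        Integrable (fun ω => v ω i * h ω i) μ := fun i _ =>
      my_int_mul (my_coord_memLp hv2 i) (my_coord_memLp hh2 i)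
    have h2 := condExp_finsetSum (m := m) (μ := μ) hsumint
    have h3 : (fun ω => ∑ i : Fin n, v ω i * h ω i)
        = ∑ i : Fin n, fun ω => v ω i * h ω i := by
      funext ω; simp
    rw [h3]
    refine h2.trans ?_
    have h4 : ∀ᵐ ω ∂μ, ∀ i : Fin n,
        (μ[(fun ω' => v ω' i * h ω' i)|m]) ω = v ω i * (μ[h|m]) ω i := by
      rw [ae_all_iff]; exact fun i => hmul i
    filter_upwards [h4] with ω hω
    simp only [Finset.sum_apply]
    rw [Finset.sum_congr rfl fun i _ => hω i]
    exact (hsum (μ[h|m]) ω).symm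
  have hic : ∫ ω, (μ[(fun ω' => ⟪v ω', h ω'⟫)|m]) ω ∂μ = ∫ ω, ⟪v ω, h ω⟫ ∂μ :=
    integral_condExp hm
  rw [← hic]
  exact integral_congr_ae hce

end Aux2

set_option maxHeartbeats 2000000 in
/-- convergence of biased SGD (Theorem 2 of the paper).
With `L`-Lipschitz gradient, `f ≥ f*`, iterates `x^k = x^{k−1} − γ g^k`,
conditionally biased gradients `E[g^k | x^{k−1}] = ∇f(x^{k−1}) + b(x^{k−1})`
with `‖b‖ ≤ ε` and conditional variance `≤ ν²`, and `0 < γ ≤ 1/L`: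
`E[(1/t) Σ_{k=1}^t ‖∇f(x^{k−1})‖²] ≤ (2/(γt))(f(x⁰) − f*) + γLν² + ε²`. -/
theorem stmt9 {n : ℕ} {Ω : Type*} {mΩ : MeasurableSpace Ω}
    (μ : Measure Ω) [IsProbabilityMeasure μ]
    (ℱ : Filtration ℕ mΩ)
    (f : EuclideanSpace ℝ (Fin n) → ℝ)
    (f' : EuclideanSpace ℝ (Fin n) → EuclideanSpace ℝ (Fin n))
    (hf : ∀ x, HasGradientAt f (f' x) x)
    (L : ℝ) (hL : 0 < L)
    (hlip : ∀ x y, ‖f' x - f' y‖ ≤ L * ‖x - y‖)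
    (fstar : ℝ) (hfstar : ∀ x, fstar ≤ f x)
    (γ ε ν : ℝ) (hγ : 0 < γ) (hγL : γ ≤ 1 / L) (hε : 0 ≤ ε) (hν : 0 ≤ ν)
    (x : ℕ → Ω → EuclideanSpace ℝ (Fin n))
    (g : ℕ → Ω → EuclideanSpace ℝ (Fin n))
    (bias : EuclideanSpace ℝ (Fin n) → EuclideanSpace ℝ (Fin n))
    (hbias : ∀ y, ‖bias y‖ ≤ ε)
    (x0 : EuclideanSpace ℝ (Fin n))
    (hx0 : ∀ ω, x 0 ω = x0)
    (hrec : ∀ k : ℕ, ∀ ω, x (k + 1) ω = x k ω - γ • g (k + 1) ω)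
    (hx_adapted : MeasureTheory.StronglyAdapted ℱ x)
    (hg_meas : ∀ k, Measurable (g k))
    (hg_L2 : ∀ k, MemLp (g k) 2 μ)
    (hcond_mean : ∀ k : ℕ,
      μ[g (k + 1) | ℱ k] =ᵐ[μ] fun ω => f' (x k ω) + bias (x k ω))
    (hcond_var : ∀ k : ℕ, ∀ᵐ ω ∂μ,
      (μ[(fun ω' => ‖g (k + 1) ω' - (f' (x k ω') + bias (x k ω'))‖ ^ 2) |
        ℱ k]) ω ≤ ν ^ 2)
    (t : ℕ) (ht : 1 ≤ t) :
    (∫ ω, (1 / (t : ℝ)) * ∑ k ∈ Finset.range t, ‖f' (x k ω)‖ ^ 2 ∂μ) ≤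
      2 / (γ * t) * (f x0 - fstar) + γ * L * ν ^ 2 + ε ^ 2 := by
    classical
  have hmle : ∀ k : ℕ, ℱ k ≤ mΩ := fun k => ℱ.le k
  have hf'cont : Continuous f' := my_lip_cont hL.le hlip
  have hfcont : Continuous f := by
    rw [continuous_iff_continuousAt]
    exact fun y => ((hf y).differentiableAt).continuousAt
  have hγL1 : γ * L ≤ 1 := by
    calc γ * L ≤ (1/L) * L := mul_le_mul_of_nonneg_right hγL hL.le
      _ = 1 := by field_simp
  have hx0' : x 0 = fun _ => x0 := funext hx0
  have hx2 : ∀ k, MemLp (x k) 2 μ := by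
    intro k
    induction k with
    | zero => rw [hx0']; exact memLp_const x0
    | succ k ih =>
      have hh : x (k+1) = fun ω => x k ω - γ • g (k+1) ω := funext (hrec k)
      rw [hh]
      exact ih.sub ((hg_L2 (k+1)).const_smul γ)
  have hVsm : ∀ k, StronglyMeasurable[ℱ k] fun ω => f' (x k ω) :=
    fun k => hf'cont.comp_stronglyMeasurable (hx_adapted k)
  have hVaesm : ∀ k, AEStronglyMeasurable (fun ω => f' (x k ω)) μ :=
    fun k => ((hVsm k).mono (hmle k)).aestronglyMeasurable
  have hV2 : ∀ k, MemLp (fun ω => f' (x k ω)) 2 μ := by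
    intro k
    have hWb : MemLp (fun ω => ‖f' 0‖ + L * ‖x k ω‖) 2 μ :=
      (memLp_const (‖f' 0‖)).add (((hx2 k).norm).const_mul L)
    refine MemLp.of_le hWb (hVaesm k) (ae_of_all _ fun ω => ?_)
    have h1 : ‖f' (x k ω)‖ ≤ ‖f' 0‖ + L * ‖x k ω‖ := by
      have h2 := hlip (x k ω) 0
      have h3 := norm_sub_norm_le (f' (x k ω)) (f' 0)
      simp only [sub_zero] at h2
      linarith
    have h2 : (0:ℝ) ≤ ‖f' 0‖ + L * ‖x k ω‖ := by positivity
    rwa [Real.norm_eq_abs, abs_of_nonneg h2]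
  have hVsq_int : ∀ k, Integrable (fun ω => ‖f' (x k ω)‖ ^ 2) μ :=
    fun k => (hV2 k).norm.integrable_sq
  have hquad : ∀ y : EuclideanSpace ℝ (Fin n), f y ≤ f 0 + ‖f' 0‖ * ‖y‖ + L/2 * ‖y‖^2 := by
    intro y
    have h := my_descent hf hL.le hlip 0 y
    have h2 : ⟪f' 0, y - 0⟫ ≤ ‖f' 0‖ * ‖y‖ := by
      have h3 := real_inner_le_norm (f' 0) (y - 0)
      simpa using h3
    simp only [sub_zero] at h h2
    linarith
  have hfx_int : ∀ k, Integrable (fun ω => f (x k ω)) μ := by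
    intro k
    have hgint : Integrable (fun ω => |fstar| + (|f 0| + ‖f' 0‖ * ‖x k ω‖ + L/2 * ‖x k ω‖^2)) μ :=
      (integrable_const _).add (((integrable_const _).add
        ((((hx2 k).integrable one_le_two).norm.const_mul _))).add
        (((hx2 k).norm.integrable_sq).const_mul _))
    refine Integrable.mono' hgint (hfcont.comp_aestronglyMeasurable (hx2 k).aestronglyMeasurable)
      (ae_of_all _ fun ω => ?_)
    rw [Real.norm_eq_abs, abs_le]
    have h0 : (0:ℝ) ≤ ‖f' 0‖ * ‖x k ω‖ + L/2 * ‖x k ω‖^2 := by positivity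
    constructor
    · have h1 : -|fstar| ≤ fstar := neg_abs_le fstar
      have h2 := hfstar (x k ω)
      have h3 : (0:ℝ) ≤ |f 0| := abs_nonneg _
      linarith
    · have h1 := hquad (x k ω)
      have h2 : f 0 ≤ |f 0| := le_abs_self _
      have h3 : (0:ℝ) ≤ |fstar| := abs_nonneg _
      linarith
  -- one-step inequality
  have step : ∀ k : ℕ,
      (∫ ω, f (x (k+1) ω) ∂μ) ≤ (∫ ω, f (x k ω) ∂μ)
        - γ/2 * (∫ ω, ‖f' (x k ω)‖^2 ∂μ) + γ/2 * ε^2 + L*γ^2/2 * ν^2 := by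
    intro k
    have hG2 : MemLp (g (k+1)) 2 μ := hg_L2 (k+1)
    have hMe : μ[g (k+1)|ℱ k] =ᵐ[μ] fun ω => f' (x k ω) + bias (x k ω) := hcond_mean k
    have hMsm' : AEStronglyMeasurable[ℱ k] (fun ω => f' (x k ω) + bias (x k ω)) μ :=
      AEStronglyMeasurable.congr stronglyMeasurable_condExp.aestronglyMeasurable hMe
    have hMaesm : AEStronglyMeasurable (fun ω => f' (x k ω) + bias (x k ω)) μ :=
      ((stronglyMeasurable_condExp.mono (hmle k)).aestronglyMeasurable).congr hMe
    have hBaesm : AEStronglyMeasurable (fun ω => bias (x k ω)) μ := by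
      have h0 : (fun ω => bias (x k ω))
          = fun ω => (f' (x k ω) + bias (x k ω)) - f' (x k ω) := by
        funext ω; abel
      rw [h0]; exact hMaesm.sub (hVaesm k)
    have hB2 : MemLp (fun ω => bias (x k ω)) 2 μ :=
      MemLp.of_bound hBaesm ε (ae_of_all _ fun ω => hbias _)
    have hM2 : MemLp (fun ω => f' (x k ω) + bias (x k ω)) 2 μ := (hV2 k).add hB2
    have hIVG : ∫ ω, ⟪f' (x k ω), g (k+1) ω⟫ ∂μ
        = ∫ ω, ⟪f' (x k ω), f' (x k ω) + bias (x k ω)⟫ ∂μ := by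
      rw [my_integral_inner_condexp (hmle k) ((hVsm k).aestronglyMeasurable) (hV2 k) hG2]
      exact integral_congr_ae (hMe.mono fun ω hω => by dsimp only; dsimp only at hω; rw [hω])
    have hIMG : ∫ ω, ⟪f' (x k ω) + bias (x k ω), g (k+1) ω⟫ ∂μ
        = ∫ ω, ‖f' (x k ω) + bias (x k ω)‖^2 ∂μ := by
      rw [my_integral_inner_condexp (hmle k) hMsm' hM2 hG2]
      refine integral_congr_ae (hMe.mono fun ω hω => ?_)
      dsimp only; dsimp only at hω
      rw [hω, real_inner_self_eq_norm_sq]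
    have hGM2 : MemLp (fun ω => g (k+1) ω - (f' (x k ω) + bias (x k ω))) 2 μ := hG2.sub hM2
    have hGMsq_int : Integrable (fun ω => ‖g (k+1) ω - (f' (x k ω) + bias (x k ω))‖^2) μ :=
      hGM2.norm.integrable_sq
    have hvar : ∫ ω, ‖g (k+1) ω - (f' (x k ω) + bias (x k ω))‖^2 ∂μ ≤ ν^2 := by
      have h0 : ∫ ω, (μ[(fun ω' => ‖g (k + 1) ω' - (f' (x k ω') + bias (x k ω'))‖ ^ 2)|ℱ k]) ω ∂μ
          = ∫ ω, ‖g (k+1) ω - (f' (x k ω) + bias (x k ω))‖^2 ∂μ := integral_condExp (hmle k)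
      rw [← h0]
      have h1 := integral_mono_ae integrable_condExp (integrable_const (ν^2)) (hcond_var k)
      simpa using h1
    have hGsq_int : Integrable (fun ω => ‖g (k+1) ω‖^2) μ := hG2.norm.integrable_sq
    have hMsq_int : Integrable (fun ω => ‖f' (x k ω) + bias (x k ω)‖^2) μ :=
      hM2.norm.integrable_sq
    have hMG_int : Integrable (fun ω => ⟪f' (x k ω) + bias (x k ω), g (k+1) ω⟫) μ :=
      my_int_inner hM2 hG2
    have hVG_int : Integrable (fun ω => ⟪f' (x k ω), g (k+1) ω⟫) μ :=
      my_int_inner (hV2 k) hG2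
    have hexp : ∫ ω, ‖g (k+1) ω‖^2 ∂μ ≤ ν^2 + ∫ ω, ‖f' (x k ω) + bias (x k ω)‖^2 ∂μ := by
      have hpt : (fun ω => ‖g (k+1) ω‖^2)
          = fun ω => ‖g (k+1) ω - (f' (x k ω) + bias (x k ω))‖^2
            + (2 * ⟪f' (x k ω) + bias (x k ω), g (k+1) ω⟫
              - ‖f' (x k ω) + bias (x k ω)‖^2) := by
        funext ω
        have h1 := norm_sub_sq_real (g (k+1) ω) (f' (x k ω) + bias (x k ω))
        have h2 : ⟪g (k+1) ω, f' (x k ω) + bias (x k ω)⟫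
            = ⟪f' (x k ω) + bias (x k ω), g (k+1) ω⟫ := real_inner_comm _ _
        rw [h2] at h1
        linarith
      have hsmul_int : Integrable
          (fun ω => 2 * ⟪f' (x k ω) + bias (x k ω), g (k+1) ω⟫) μ := hMG_int.const_mul 2
      have hsub_int : Integrable (fun ω => 2 * ⟪f' (x k ω) + bias (x k ω), g (k+1) ω⟫
          - ‖f' (x k ω) + bias (x k ω)‖^2) μ := hsmul_int.sub hMsq_int
      rw [hpt, integral_add hGMsq_int hsub_int,
        integral_sub hsmul_int hMsq_int, MeasureTheory.integral_const_mul, hIMG]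
      linarith [hvar]
    have hdesc : ∀ ω, f (x (k+1) ω) ≤ f (x k ω)
        + ((-γ) * ⟪f' (x k ω), g (k+1) ω⟫ + L*γ^2/2 * ‖g (k+1) ω‖^2) := by
      intro ω
      have h := my_descent hf hL.le hlip (x k ω) (x (k+1) ω)
      have hb : x (k+1) ω - x k ω = -(γ • g (k+1) ω) := by rw [hrec k ω]; abel
      rw [hb, inner_neg_right, real_inner_smul_right, norm_neg, norm_smul] at h
      have hγa : ‖γ‖ = γ := by rw [Real.norm_eq_abs, abs_of_pos hγ]
      rw [hγa] at h
      have hring : L / 2 * (γ * ‖g (k+1) ω‖)^2 = L*γ^2/2 * ‖g (k+1) ω‖^2 := by ring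
      linarith
    have hterm2a : Integrable (fun ω => (-γ) * ⟪f' (x k ω), g (k+1) ω⟫) μ :=
      hVG_int.const_mul _
    have hterm2b : Integrable (fun ω => L*γ^2/2 * ‖g (k+1) ω‖^2) μ := hGsq_int.const_mul _
    have hterm2 : Integrable (fun ω => (-γ) * ⟪f' (x k ω), g (k+1) ω⟫
        + L*γ^2/2 * ‖g (k+1) ω‖^2) μ := hterm2a.add hterm2b
    have hint_rhs : Integrable (fun ω => f (x k ω)
        + ((-γ) * ⟪f' (x k ω), g (k+1) ω⟫ + L*γ^2/2 * ‖g (k+1) ω‖^2)) μ :=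
      (hfx_int k).add hterm2
    have hI := integral_mono (hfx_int (k+1)) hint_rhs hdesc
    rw [integral_add (hfx_int k) hterm2, integral_add hterm2a hterm2b,
      MeasureTheory.integral_const_mul, MeasureTheory.integral_const_mul, hIVG] at hI
    set IVM := ∫ ω, ⟪f' (x k ω), f' (x k ω) + bias (x k ω)⟫ ∂μ with hIVMdef
    set IM := ∫ ω, ‖f' (x k ω) + bias (x k ω)‖^2 ∂μ with hIMdef
    set IV := ∫ ω, ‖f' (x k ω)‖^2 ∂μ with hIVdef
    set IB := ∫ ω, ‖bias (x k ω)‖^2 ∂μ with hIBdef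
    have hIM0 : 0 ≤ IM := integral_nonneg fun ω => sq_nonneg _
    have hBsq_int : Integrable (fun ω => ‖bias (x k ω)‖^2) μ := hB2.norm.integrable_sq
    have hVM_int : Integrable (fun ω => ⟪f' (x k ω), f' (x k ω) + bias (x k ω)⟫) μ :=
      my_int_inner (hV2 k) hM2
    have hcomb : -γ * IVM + γ/2 * IM = γ/2 * IB - γ/2 * IV := by
      have h0 : ∫ ω, (-γ * ⟪f' (x k ω), f' (x k ω) + bias (x k ω)⟫
            + γ/2 * ‖f' (x k ω) + bias (x k ω)‖^2) ∂μ
          = ∫ ω, (γ/2 * ‖bias (x k ω)‖^2 - γ/2 * ‖f' (x k ω)‖^2) ∂μ := by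
        refine integral_congr_ae (ae_of_all _ fun ω => ?_)
        dsimp only
        have h1 := norm_add_sq_real (f' (x k ω)) (bias (x k ω))
        have h2 : ⟪f' (x k ω), f' (x k ω) + bias (x k ω)⟫
            = ‖f' (x k ω)‖^2 + ⟪f' (x k ω), bias (x k ω)⟫ := by
          rw [inner_add_right, real_inner_self_eq_norm_sq]
        rw [h2, h1]; ring
      have hA1 : Integrable (fun ω => -γ * ⟪f' (x k ω), f' (x k ω) + bias (x k ω)⟫) μ :=
        hVM_int.const_mul _
      have hA2 : Integrable (fun ω => γ/2 * ‖f' (x k ω) + bias (x k ω)‖^2) μ :=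
        hMsq_int.const_mul _
      have hA3 : Integrable (fun ω => γ/2 * ‖bias (x k ω)‖^2) μ := hBsq_int.const_mul _
      have hA4 : Integrable (fun ω => γ/2 * ‖f' (x k ω)‖^2) μ := (hVsq_int k).const_mul _
      rw [integral_add hA1 hA2, integral_sub hA3 hA4,
        MeasureTheory.integral_const_mul, MeasureTheory.integral_const_mul,
        MeasureTheory.integral_const_mul, MeasureTheory.integral_const_mul] at h0
      exact h0
    have hIB : IB ≤ ε^2 := by
      have h0 : ∫ ω, ‖bias (x k ω)‖^2 ∂μ ≤ ∫ _ω, (ε^2 : ℝ) ∂μ :=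
        integral_mono hBsq_int (integrable_const _) fun ω => by
          have h1 := hbias (x k ω); nlinarith [norm_nonneg (bias (x k ω))]
      simpa using h0
    have hLγ2 : L*γ^2/2 * IM ≤ γ/2 * IM := by
      apply mul_le_mul_of_nonneg_right _ hIM0
      nlinarith
    have h2 : (L*γ^2/2) * (∫ ω, ‖g (k+1) ω‖^2 ∂μ) ≤ L*γ^2/2*ν^2 + γ/2 * IM := by
      have hLγ0 : (0:ℝ) ≤ L*γ^2/2 := by positivity
      calc (L*γ^2/2) * (∫ ω, ‖g (k+1) ω‖^2 ∂μ) ≤ (L*γ^2/2) * (ν^2 + IM) :=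
        mul_le_mul_of_nonneg_left hexp hLγ0
      _ ≤ L*γ^2/2*ν^2 + γ/2 * IM := by nlinarith
    have hIB' : γ/2 * IB ≤ γ/2 * ε^2 := mul_le_mul_of_nonneg_left hIB (by positivity)
    linarith
  -- telescoping
  have tele : ∀ T : ℕ, (∫ ω, f (x T ω) ∂μ)
      + γ/2 * ∑ k ∈ Finset.range T, (∫ ω, ‖f' (x k ω)‖^2 ∂μ)
      ≤ f x0 + T * (γ/2 * ε^2 + L*γ^2/2 * ν^2) := by
    intro T
    induction T with
    | zero => simp [hx0']
    | succ T ih =>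
      have hstep := step T
      rw [Finset.sum_range_succ]
      push_cast
      push_cast at ih
      linarith
  have ht' : (0:ℝ) < t := by
    have : 0 < t := ht
    exact_mod_cast this
  have hlhs : (∫ ω, (1 / (t : ℝ)) * ∑ k ∈ Finset.range t, ‖f' (x k ω)‖ ^ 2 ∂μ)
      = (1/(t:ℝ)) * ∑ k ∈ Finset.range t, (∫ ω, ‖f' (x k ω)‖^2 ∂μ) := by
    rw [MeasureTheory.integral_const_mul]
    congr 1
    exact integral_finset_sum (Finset.range t) (fun i _ => hVsq_int i)
  rw [hlhs]
  have hfs : fstar ≤ ∫ ω, f (x t ω) ∂μ := by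
    have h0 : ∫ _ω, (fstar:ℝ) ∂μ ≤ ∫ ω, f (x t ω) ∂μ :=
      integral_mono (integrable_const _) (hfx_int t) fun ω => hfstar _
    simpa using h0
  have hkey : γ/2 * ∑ k ∈ Finset.range t, (∫ ω, ‖f' (x k ω)‖^2 ∂μ)
      ≤ (f x0 - fstar) + t * (γ/2 * ε^2 + L*γ^2/2 * ν^2) := by
    have h0 := tele t
    linarith
  have hγ0 : γ ≠ 0 := ne_of_gt hγ
  have ht0 : (t:ℝ) ≠ 0 := ne_of_gt ht'
  have hc : (0:ℝ) < 2/(γ*t) := by positivity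
  have key2 := mul_le_mul_of_nonneg_left hkey hc.le
  have e1 : 2/(γ*(t:ℝ)) * (γ/2 * ∑ k ∈ Finset.range t, (∫ ω, ‖f' (x k ω)‖^2 ∂μ))
      = 1/(t:ℝ) * ∑ k ∈ Finset.range t, (∫ ω, ‖f' (x k ω)‖^2 ∂μ) := by
    field_simp
  have e2 : 2/(γ*(t:ℝ)) * ((f x0 - fstar) + t * (γ/2 * ε^2 + L*γ^2/2 * ν^2))
      = 2/(γ*t) * (f x0 - fstar) + γ*L*ν^2 + ε^2 := by
    field_simp
    ring
  rw [e1, e2] at key2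
  exact key2
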